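/- Let A be the nilpotent Matsuo algebra of a connected Fischer space over a field k of characteristic 2, and let s be the sum of all points. Then the annihilator Ann(A) = {a ∈ A : a·b = 0 for all b ∈ A} is exactly the one-dimensional subspace spanned by s. -/

import Mathlib

/-- A partial triple system, given by a collinearity relation `col` and a map `third`
sending two distinct collinear points to the third point on their line. -/
structure IsPTS {P : Type*} (col : P → P → Prop) (third : P → P → P) : Prop where
  symm : ∀ x y, col x y → col y x
  irrefl : ∀ x, ¬ col x x
  third_symm : ∀ x y, col x y → third x y = third y x
  col_third : ∀ x y, col x y → col x (third x y)
  third_ne_left : ∀ x y, col x y → third x y ≠ x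
  third_ne_right : ∀ x y, col x y → third x y ≠ y
  third_third : ∀ x y, col x y → third x (third x y) = y
  unique_line : ∀ x y u v, col x y → col u v →
    x ∈ ({u, v, third u v} : Set P) → y ∈ ({u, v, third u v} : Set P) →
    ({x, y, third x y} : Set P) = {u, v, third u v}

/-- A subspace of a partial triple system: a set of points closed under taking
the third point of a line through two of its points. -/
def IsSubspace {P : Type*} (col : P → P → Prop) (third : P → P → P) (S : Set P) : Prop :=
  ∀ x ∈ S, ∀ y ∈ S, col x y → third x y ∈ S

/-- The subspace generated by a set of points. -/
def fclosure {P : Type*} (col : P → P → Prop) (third : P → P → P) (T : Set P) : Set P :=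
  ⋂₀ {S | T ⊆ S ∧ IsSubspace col third S}

/-- The line through two distinct collinear points, as a set. -/
def lineSet {P : Type*} (third : P → P → P) (x y : P) : Set P := {x, y, third x y}

/-- The six points of the complete quadrilateral (dual affine plane of order 2). -/
inductive CQPt | A | B | C | X | Y | Z
deriving DecidableEq

/-- The "opposite point" involution of the complete quadrilateral. -/
def CQPt.opp : CQPt → CQPt
  | .A => .X | .X => .A | .B => .Y | .Y => .B | .C => .Z | .Z => .C

/-- Collinearity in the complete quadrilateral with lines
{A,B,C}, {A,Y,Z}, {B,X,Z}, {C,X,Y}: two points are collinear iff they are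
distinct and not opposite. -/
def CQPt.col (p q : CQPt) : Prop := p ≠ q ∧ q ≠ p.opp

/-- The third point on the line through two distinct collinear points of the
complete quadrilateral. -/
def CQPt.third : CQPt → CQPt → CQPt
  | .A, .B => .C | .B, .A => .C | .A, .C => .B | .C, .A => .B | .B, .C => .A | .C, .B => .A
  | .A, .Y => .Z | .Y, .A => .Z | .A, .Z => .Y | .Z, .A => .Y | .Y, .Z => .A | .Z, .Y => .A
  | .B, .X => .Z | .X, .B => .Z | .B, .Z => .X | .Z, .B => .X | .X, .Z => .B | .Z, .X => .B
  | .C, .X => .Y | .X, .C => .Y | .C, .Y => .X | .Y, .C => .X | .X, .Y => .C | .Y, .X => .C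
  | p, _ => p

/-- A set of points is a complete quadrilateral if it is the isomorphic image of
the standard one (preserving collinearity and the `third` operation). -/
def IsCQSet {P : Type*} (col : P → P → Prop) (third : P → P → P) (S : Set P) : Prop :=
  ∃ f : CQPt → P, Function.Injective f ∧ Set.range f = S ∧
    (∀ u v, col (f u) (f v) ↔ CQPt.col u v) ∧
    (∀ u v, CQPt.col u v → f (CQPt.third u v) = third (f u) (f v))

/-- A set of points is an affine plane of order 3 if it is the isomorphic image of
`AG(2,3)` (any two distinct points collinear, third point `-(u+v)`). -/
def IsAPSet {P : Type*} (col : P → P → Prop) (third : P → P → P) (S : Set P) : Prop :=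
  ∃ f : ZMod 3 × ZMod 3 → P, Function.Injective f ∧ Set.range f = S ∧
    (∀ u v, col (f u) (f v) ↔ u ≠ v) ∧
    (∀ u v, u ≠ v → f (-(u + v)) = third (f u) (f v))

/-- A Fischer space: a partial triple system in which the subspace generated by two
distinct intersecting lines is a complete quadrilateral or an affine plane of order 3. -/
structure IsFischer {P : Type*} (col : P → P → Prop) (third : P → P → P)
    extends IsPTS col third : Prop where
  dichotomy : ∀ x y u v, col x y → col u v →
    lineSet third x y ≠ lineSet third u v →
    (lineSet third x y ∩ lineSet third u v).Nonempty →
    IsCQSet col third (fclosure col third (lineSet third x y ∪ lineSet third u v)) ∨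
    IsAPSet col third (fclosure col third (lineSet third x y ∪ lineSet third u v))

/-- A Fischer space of symplectic type: the subspace generated by two distinct
intersecting lines is always a complete quadrilateral. -/
structure IsSymplectic {P : Type*} (col : P → P → Prop) (third : P → P → P)
    extends IsPTS col third : Prop where
  cq : ∀ x y u v, col x y → col u v →
    lineSet third x y ≠ lineSet third u v →
    (lineSet third x y ∩ lineSet third u v).Nonempty →
    IsCQSet col third (fclosure col third (lineSet third x y ∪ lineSet third u v))

/-- `A` is the nilpotent Matsuo algebra (char 2) of the geometry `(col, third)`,
with `e` the natural basis indexed by the points. -/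
structure IsNilMatsuo (R : Type*) {A P : Type*} [CommRing R] [NonUnitalNonAssocCommRing A]
    [Module R A] (col : P → P → Prop) (third : P → P → P) (e : P → A) : Prop where
  char2 : (2 : R) = 0
  mul_same : ∀ p, e p * e p = 0
  mul_of_not_col : ∀ p q, p ≠ q → ¬ col p q → e p * e q = 0
  mul_of_col : ∀ p q, p ≠ q → col p q → e p * e q = e p + e q + e (third p q)

/-- For the nilpotent Matsuo algebra of a connected Fischer space (with finite point
set) over a field of characteristic 2, the annihilator `{a | a·b = 0 for all b}` is
exactly the span of the sum `s` of all points. -/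
theorem stmt6 {k A P : Type*} [Field k] [NonUnitalNonAssocCommRing A]
    [Module k A] [SMulCommClass k A A] [IsScalarTower k A A] [Fintype P]
    (col : P → P → Prop) (third : P → P → P)
    (hF : IsFischer col third)
    (hconn : ∀ x y : P, Relation.ReflTransGen col x y)
    (e : Module.Basis P k A) (hM : IsNilMatsuo k col third ⇑e) :
    {a : A | ∀ b : A, a * b = 0} =
      (Submodule.span k ({∑ p : P, e p} : Set A) : Set A) := by
  classical
  have hPTS := hF.toIsPTS
  have hcol_ne : ∀ {p q : P}, col p q → p ≠ q := fun {p q} h hpq =>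
    hPTS.irrefl q (hpq ▸ h)
  set N : P → Finset P := fun q => Finset.univ.filter (fun p => col p q) with hN
  have hmemN : ∀ {p q : P}, p ∈ N q ↔ col p q := by
    intro p q; simp [hN]
  have hsigma : ∀ {p q : P}, col p q → third q p ∈ N q := by
    intro p q h
    rw [hmemN]
    exact hPTS.symm _ _ (hPTS.col_third q p (hPTS.symm _ _ h))
  have hsigma2 : ∀ {p q : P}, col p q → third q (third q p) = p :=
    fun {p q} h => hPTS.third_third q p (hPTS.symm _ _ h)
  have h11 : (1 : k) + 1 = 0 := by
    have h2 := hM.char2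
    linear_combination h2
  -- The key multiplication formula
  have key : ∀ (c : P → k) (q : P),
      (∑ p : P, c p • e p) * e q
        = ∑ p ∈ N q, (c p + c (third q p)) • e p + (∑ p ∈ N q, c p) • e q := by
    intro c q
    rw [Finset.sum_mul]
    have h1 : ∀ p : P, (c p • e p) * e q
        = if col p q then c p • e p + c p • e q + c p • e (third q p) else 0 := by
      intro p
      rw [smul_mul_assoc]
      by_cases h : col p q
      · rw [hM.mul_of_col p q (hcol_ne h) h, if_pos h, hPTS.third_symm p q h,
          smul_add, smul_add]
      · rw [if_neg h]
        rcases eq_or_ne p q with rfl | hpq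
        · rw [hM.mul_same]; simp
        · rw [hM.mul_of_not_col p q hpq h]; simp
    have hre : ∑ p ∈ N q, c p • e (third q p) = ∑ p ∈ N q, c (third q p) • e p := by
      apply Finset.sum_nbij' (fun p => third q p) (fun p => third q p)
      · intro p hp; exact hsigma (hmemN.mp hp)
      · intro p hp; exact hsigma (hmemN.mp hp)
      · intro p hp; exact hsigma2 (hmemN.mp hp)
      · intro p hp; exact hsigma2 (hmemN.mp hp)
      · intro p hp
        rw [hsigma2 (hmemN.mp hp)]
    calc ∑ p : P, (c p • e p) * e q
        = ∑ p : P, if col p q then c p • e p + c p • e q + c p • e (third q p) else 0 :=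
          Finset.sum_congr rfl fun p _ => h1 p
      _ = ∑ p ∈ N q, (c p • e p + c p • e q + c p • e (third q p)) :=
          (Finset.sum_filter _ _).symm
      _ = (∑ p ∈ N q, c p • e p + ∑ p ∈ N q, c p • e (third q p))
            + ∑ p ∈ N q, c p • e q := by
          rw [Finset.sum_add_distrib, Finset.sum_add_distrib]; abel
      _ = ∑ p ∈ N q, (c p + c (third q p)) • e p + (∑ p ∈ N q, c p) • e q := by
          rw [hre, ← Finset.sum_add_distrib, Finset.sum_smul]
          congr 1
          exact Finset.sum_congr rfl fun p _ => (add_smul _ _ _).symm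
  -- s kills every basis vector
  have hsum1 : ∀ q : P, (∑ p ∈ N q, (1 : k)) = 0 := by
    intro q
    apply Finset.sum_involution (fun p _ => third q p)
    · intro a ha; exact h11
    · intro a ha _
      exact hPTS.third_ne_right q a (hPTS.symm _ _ (hmemN.mp ha))
    · intro a ha; exact hsigma (hmemN.mp ha)
    · intro a ha; exact hsigma2 (hmemN.mp ha)
  have hs_ann : ∀ q : P, (∑ p : P, e p) * e q = 0 := by
    intro q
    have h := key (fun _ => (1 : k)) q
    simp only [one_smul] at h
    rw [h, hsum1]
    simp [h11]
  have hs_ann' : ∀ b : A, (∑ p : P, e p) * b = 0 := by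
    intro b
    conv_lhs => rw [← e.sum_repr b]
    rw [Finset.mul_sum]
    apply Finset.sum_eq_zero
    intro r _
    rw [mul_smul_comm, hs_ann, smul_zero]
  ext a
  simp only [Set.mem_setOf_eq, SetLike.mem_coe, Submodule.mem_span_singleton]
  constructor
  · intro ha
    set c : P → k := fun p => e.repr a p with hc
    have hrepr : (∑ p : P, c p • e p) = a := e.sum_repr a
    -- derive the coefficient relations
    have hrel : ∀ q p : P, col p q → c p + c (third q p) = 0 := by
      intro q p hpq
      set g : P → k := fun p =>
        (if col p q then c p + c (third q p) else 0)
          + (if p = q then ∑ r ∈ N q, c r else 0) with hgdef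
      have hg : ∑ p : P, g p • e p = 0 := by
        have e1 : ∑ p : P, g p • e p
            = ∑ p : P, (if col p q then c p + c (third q p) else 0) • e p
              + ∑ p : P, (if p = q then ∑ r ∈ N q, c r else 0) • e p := by
          rw [← Finset.sum_add_distrib]
          exact Finset.sum_congr rfl fun p _ => add_smul _ _ _
        have e2 : ∑ p : P, (if col p q then c p + c (third q p) else 0) • e p
            = ∑ p ∈ N q, (c p + c (third q p)) • e p := by
          rw [hN, Finset.sum_filter]
          exact Finset.sum_congr rfl fun p _ => by split <;> simp
        have e3 : ∑ p : P, (if p = q then ∑ r ∈ N q, c r else 0) • e p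
            = (∑ r ∈ N q, c r) • e q := by
          rw [Finset.sum_eq_single q]
          · simp
          · intro b _ hb; simp [hb]
          · intro h; exact absurd (Finset.mem_univ q) h
        rw [e1, e2, e3, ← key c q, hrepr]
        exact ha (e q)
      have hg0 := Fintype.linearIndependent_iff.mp e.linearIndependent g hg p
      rw [hgdef] at hg0
      simp only [if_pos hpq, if_neg (hcol_ne hpq)] at hg0
      simpa using hg0
    have hadj : ∀ x y : P, col x y → c x = c y := by
      intro x y hxy
      have h1 := hrel y x hxy
      have h2 := hrel x y (hPTS.symm _ _ hxy)
      rw [hPTS.third_symm y x (hPTS.symm _ _ hxy)] at h1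
      linear_combination h1 - h2
    have hconst : ∀ x y : P, c x = c y := by
      intro x y
      induction hconn x y with
      | refl => rfl
      | tail _ hcol ih => exact ih.trans (hadj _ _ hcol)
    by_cases hP : Nonempty P
    · obtain ⟨x₀⟩ := hP
      refine ⟨c x₀, ?_⟩
      rw [Finset.smul_sum, ← hrepr]
      exact Finset.sum_congr rfl fun p _ => by rw [hconst x₀ p]
    · refine ⟨0, ?_⟩
      rw [← hrepr]
      have : IsEmpty P := not_nonempty_iff.mp hP
      simp
  · rintro ⟨t, rfl⟩ b
    rw [smul_mul_assoc, hs_ann' b, smul_zero]
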